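/- Let L be a finite meet-semilattice, G a building set of L, x ∈ L \ {0̂}, and F(x) = max G_{≤x} = {x₁,…,x_k} the set of factors of x. Then the set of elementary divisors of x is the disjoint union of the sets of elementary divisors of the factors: D(x) = D(x₁) ⊎ … ⊎ D(x_k). -/

import Mathlib

attribute [local instance] Classical.propDecidable

universe u

/-- The set of maximal elements of `G` below `x`. -/
def maxBelow {L : Type u} [PartialOrder L] (G : Set L) (x : L) : Set L :=
  {g | g ∈ G ∧ g ≤ x ∧ ∀ h ∈ G, h ≤ x → g ≤ h → h = g}

/-- The tuple in the product of lower intervals which is `g` in the coordinate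
indexed by `g` and bottom elsewhere. -/
noncomputable def deltaTuple {L : Type u} [PartialOrder L] [OrderBot L] (G : Set L) (x : L)
    (g : maxBelow G x) : (h : maxBelow G x) → Set.Iic (h : L) :=
  fun h => if (h : L) = (g : L) then ⟨(h : L), le_refl _⟩ else ⟨⊥, bot_le⟩

/-- `G` is a (combinatorial) building set: `G` avoids the bottom element, and for every
`x ≠ ⊥` the interval `[⊥, x]` decomposes as the product of the intervals below the maximal
elements of `G` below `x`, via an isomorphism sending delta tuples to the corresponding
maximal elements. -/
def IsBuilding {L : Type u} [PartialOrder L] [OrderBot L] (G : Set L) : Prop :=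
  (∀ g ∈ G, g ≠ ⊥) ∧
  ∀ x : L, x ≠ ⊥ →
    ∃ φ : ((h : maxBelow G x) → Set.Iic (h : L)) ≃o Set.Iic x,
      ∀ g : maxBelow G x, ((φ (deltaTuple G x g) : Set.Iic x) : L) = (g : L)

/-- A poset is irreducible if it is not order-isomorphic to a product of two posets,
each having at least two elements. -/
def IsIrreduciblePoset (P : Type u) [PartialOrder P] : Prop :=
  ¬ ∃ (A : Type u) (B : Type u) (_ : PartialOrder A) (_ : PartialOrder B),
      Nontrivial A ∧ Nontrivial B ∧ Nonempty (P ≃o A × B)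

/-- An element `x` is irreducible if the interval `[⊥, x]` is an irreducible poset. -/
def IsIrredElem {L : Type u} [PartialOrder L] (x : L) : Prop :=
  IsIrreduciblePoset (Set.Iic x)

/-- The set of elementary divisors of `x`: the maximal irreducible elements below `x`. -/
abbrev elemDivisors {L : Type u} [PartialOrder L] (x : L) : Set L :=
  maxBelow {y | IsIrredElem y} x

/-- split off one coordinate of a product of Iic's, as an order iso -/
noncomputable def iicPiSplit {L : Type u} [PartialOrder L] {ι : Type u} (c : ι → L) (i₀ : ι) :
    ((i : ι) → Set.Iic (c i)) ≃o
      (Set.Iic (c i₀) × ((j : {j : ι // j ≠ i₀}) → Set.Iic (c j.1))) where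
  toFun f := (f i₀, fun j => f j.1)
  invFun p := fun i => if h : i = i₀ then ⟨(p.1 : L), by rw [h]; exact p.1.2⟩
    else ⟨(p.2 ⟨i, h⟩ : L), (p.2 ⟨i, h⟩).2⟩
  left_inv f := by
    funext i
    by_cases h : i = i₀
    · subst h; simp
    · simp [h]
  right_inv p := by
    refine Prod.ext ?_ ?_
    · simp
    · funext j
      simp [j.2]
  map_rel_iff' {f g} := by
    constructor
    · rintro ⟨h1, h2⟩ i
      by_cases h : i = i₀
      · subst h; exact h1
      · exact h2 ⟨i, h⟩
    · intro h
      exact ⟨h i₀, fun j => h j.1⟩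

section Main
variable {L : Type u} [PartialOrder L] [OrderBot L] {G : Set L} {x : L}
variable (φ : ((h : maxBelow G x) → Set.Iic (h : L)) ≃o Set.Iic x)

/-- the interval below `y` is order-isomorphic to the product of the intervals below
the coordinates of `φ.symm y`. -/
noncomputable def intervalIso (y : L) (hy : y ≤ x) :
    Set.Iic y ≃o ((g : maxBelow G x) → Set.Iic ((φ.symm ⟨y, hy⟩ g : L))) where
  toFun z := fun g => ⟨(φ.symm ⟨(z : L), z.2.trans hy⟩ g : L), by
    exact φ.symm.monotone (show (⟨(z : L), z.2.trans hy⟩ : Set.Iic x) ≤ ⟨y, hy⟩ from z.2) g⟩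
  invFun u := ⟨(φ (fun g => ⟨(u g : L), (u g).2.trans (φ.symm ⟨y, hy⟩ g).2⟩) : L), by
    have hle : (fun g => (⟨(u g : L), (u g).2.trans (φ.symm ⟨y, hy⟩ g).2⟩ :
        Set.Iic ((g : maxBelow G x) : L))) ≤ φ.symm ⟨y, hy⟩ := fun g => (u g).2
    have := φ.monotone hle
    rwa [OrderIso.apply_symm_apply] at this⟩
  left_inv z := by
    apply Subtype.ext
    simp only [Subtype.coe_eta]
    exact congrArg Subtype.val (φ.apply_symm_apply ⟨(z : L), z.2.trans hy⟩)
  right_inv u := by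
    funext g
    apply Subtype.ext
    simp only [Subtype.coe_eta, OrderIso.symm_apply_apply]
    exact congrArg (fun t => ((t g : Set.Iic _) : L))
      (φ.symm_apply_apply (fun g => ⟨(u g : L), (u g).2.trans (φ.symm ⟨y, hy⟩ g).2⟩))
  map_rel_iff' {z w} := by
    constructor
    · intro h
      have h2 : φ.symm ⟨(z : L), z.2.trans hy⟩ ≤ φ.symm ⟨(w : L), w.2.trans hy⟩ := fun g => h g
      have := φ.symm.le_iff_le.mp h2
      exact this
    · intro h g
      exact φ.symm.monotone (show (⟨(z : L), z.2.trans hy⟩ : Set.Iic x) ≤ ⟨(w : L), _⟩ from h) g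

lemma symm_delta (hφ : ∀ g : maxBelow G x, ((φ (deltaTuple G x g) : Set.Iic x) : L) = (g : L))
    (g : maxBelow G x) : φ.symm ⟨(g : L), g.2.2.1⟩ = deltaTuple G x g := by
  have : φ (deltaTuple G x g) = ⟨(g : L), g.2.2.1⟩ := Subtype.ext (hφ g)
  rw [← this, OrderIso.symm_apply_apply]

/-- if all coordinates of `φ.symm y` are bottom then `y = ⊥`. -/
lemma eq_bot_of_coords_bot (y : L) (hy : y ≤ x)
    (h : ∀ g : maxBelow G x, ((φ.symm ⟨y, hy⟩ g : L)) = ⊥) : y = ⊥ := by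
  set b : (g : maxBelow G x) → Set.Iic ((g : maxBelow G x) : L) := fun _ => ⟨⊥, bot_le⟩ with hb
  have hbt : φ.symm ⟨y, hy⟩ = b := by
    funext g; exact Subtype.ext (h g)
  have hbbot : ∀ u : (g : maxBelow G x) → Set.Iic ((g : maxBelow G x) : L), b ≤ u :=
    fun u g => bot_le
  have h1 : φ b ≤ ⟨⊥, bot_le⟩ := by
    have := φ.monotone (hbbot (φ.symm ⟨⊥, bot_le⟩))
    rwa [OrderIso.apply_symm_apply] at this
  have h2 : (⟨y, hy⟩ : Set.Iic x) = φ b := by rw [← hbt, OrderIso.apply_symm_apply]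
  have h3 : y ≤ ⊥ := by rw [show y = ((⟨y, hy⟩ : Set.Iic x) : L) from rfl, h2]; exact h1
  exact le_bot_iff.mp h3

/-- uniqueness: a nonbot element lies below at most one maximal element. -/
lemma unique_factor (hφ : ∀ g : maxBelow G x, ((φ (deltaTuple G x g) : Set.Iic x) : L) = (g : L))
    (y : L) (hy : y ≤ x) (hyb : y ≠ ⊥) (g g' : maxBelow G x)
    (h1 : y ≤ (g : L)) (h2 : y ≤ (g' : L)) : g = g' := by
  by_contra hne
  apply hyb
  apply eq_bot_of_coords_bot φ y hy
  intro h
  have ht1 : φ.symm ⟨y, hy⟩ ≤ deltaTuple G x g := by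
    rw [← symm_delta φ hφ g]
    exact φ.symm.monotone h1
  have ht2 : φ.symm ⟨y, hy⟩ ≤ deltaTuple G x g' := by
    rw [← symm_delta φ hφ g']
    exact φ.symm.monotone h2
  have hvals : (h : L) ≠ (g : L) ∨ (h : L) ≠ (g' : L) := by
    by_contra hc
    push_neg at hc
    exact hne (Subtype.ext (hc.1.symm.trans hc.2 ▸ rfl))
  rcases hvals with hv | hv
  · have := ht1 h
    simp only [deltaTuple, if_neg hv] at this
    exact le_bot_iff.mp this
  · have := ht2 h
    simp only [deltaTuple, if_neg hv] at this
    exact le_bot_iff.mp this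

end Main

lemma exists_irred_nonbot {L : Type u} [PartialOrder L] [Fintype L] [OrderBot L]
    (z : L) (hz : z ≠ ⊥) : ∃ a : L, a ≠ ⊥ ∧ a ≤ z ∧ IsIrredElem a := by
  classical
  set S : Finset L := Finset.univ.filter (fun a => a ≠ ⊥ ∧ a ≤ z) with hS
  have hne : S.Nonempty := ⟨z, by simp [hS, hz]⟩
  obtain ⟨m, hm, hmin⟩ := S.exists_minimal hne
  simp only [hS, Finset.mem_filter, Finset.mem_univ, true_and] at hm hmin
  refine ⟨m, hm.1, hm.2, ?_⟩
  have htwo : ∀ w : L, w ≤ m → w = ⊥ ∨ w = m := by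
    intro w hw
    by_cases hwb : w = ⊥
    · exact Or.inl hwb
    · right
      exact le_antisymm hw (hmin ⟨hwb, hw.trans hm.2⟩ hw)
  rintro ⟨A, B, _, _, ⟨a₁, a₂, hA⟩, ⟨b₁, b₂, hB⟩, ⟨e⟩⟩
  set uu := e.symm (a₁, b₁) with hu
  set vv := e.symm (a₁, b₂) with hv
  set ww := e.symm (a₂, b₁) with hw
  have huv : uu ≠ vv := fun h => hB (by simpa using congrArg Prod.snd (e.symm.injective h))
  have huw : uu ≠ ww := fun h => hA (by simpa using congrArg Prod.fst (e.symm.injective h))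
  have hvw : vv ≠ ww := fun h => hA (by simpa using congrArg Prod.fst (e.symm.injective h))
  have hval : ∀ s : Set.Iic m, (s : L) = ⊥ ∨ (s : L) = m := fun s => htwo s s.2
  rcases hval uu with h1 | h1 <;> rcases hval vv with h2 | h2 <;> rcases hval ww with h3 | h3 <;>
    first
      | exact huv (Subtype.ext (h1.trans h2.symm))
      | exact huw (Subtype.ext (h1.trans h3.symm))
      | exact hvw (Subtype.ext (h2.trans h3.symm))

section Main2
variable {L : Type u} [PartialOrder L] [OrderBot L] {G : Set L} {x : L}
variable (φ : ((h : maxBelow G x) → Set.Iic (h : L)) ≃o Set.Iic x)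

lemma exists_factor (hφ : ∀ g : maxBelow G x, ((φ (deltaTuple G x g) : Set.Iic x) : L) = (g : L))
    (y : L) (hy : y ≤ x) (hyb : y ≠ ⊥) (hirr : IsIrredElem y) :
    ∃ g : maxBelow G x, y ≤ (g : L) := by
  have hex : ∃ g₁ : maxBelow G x, ((φ.symm ⟨y, hy⟩ g₁ : L)) ≠ ⊥ := by
    by_contra hc
    push_neg at hc
    exact hyb (eq_bot_of_coords_bot φ y hy hc)
  obtain ⟨g₁, hg₁⟩ := hex
  have honly : ∀ g₂ : maxBelow G x, g₂ ≠ g₁ → ((φ.symm ⟨y, hy⟩ g₂ : L)) = ⊥ := by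
    intro g₂ hne
    by_contra hg₂
    apply hirr
    refine ⟨Set.Iic ((φ.symm ⟨y, hy⟩ g₁ : L)),
      ((j : {j : ↥(maxBelow G x) // j ≠ g₁}) → Set.Iic ((φ.symm ⟨y, hy⟩ j.1 : L))),
      inferInstance, inferInstance, ?_, ?_, ?_⟩
    · exact ⟨⟨⊥, bot_le⟩, ⟨_, le_rfl⟩, fun h => hg₁ ((congrArg Subtype.val h).symm)⟩
    · refine ⟨fun j => ⟨⊥, bot_le⟩, fun j => ⟨_, le_rfl⟩, fun h => hg₂ ?_⟩
      exact (congrArg Subtype.val (congrFun h ⟨g₂, hne⟩)).symm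
    · exact ⟨(intervalIso φ y hy).trans
        (iicPiSplit (fun g => ((φ.symm ⟨y, hy⟩ g : L))) g₁)⟩
  refine ⟨g₁, ?_⟩
  have hle : φ.symm ⟨y, hy⟩ ≤ deltaTuple G x g₁ := by
    intro h
    by_cases hv : (h : L) = (g₁ : L)
    · show φ.symm ⟨y, hy⟩ h ≤ (if (h : L) = (g₁ : L) then ⟨(h : L), le_refl _⟩ else ⟨⊥, bot_le⟩)
      rw [if_pos hv]
      exact (φ.symm ⟨y, hy⟩ h).2
    · show φ.symm ⟨y, hy⟩ h ≤ (if (h : L) = (g₁ : L) then ⟨(h : L), le_refl _⟩ else ⟨⊥, bot_le⟩)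
      rw [if_neg hv]
      show ((φ.symm ⟨y, hy⟩ h : L)) ≤ ⊥
      rw [honly h (fun e => hv (congrArg Subtype.val e))]
  have := φ.monotone hle
  rw [OrderIso.apply_symm_apply] at this
  have h2 : ((φ (deltaTuple G x g₁) : Set.Iic x) : L) = (g₁ : L) := hφ g₁
  calc y ≤ ((φ (deltaTuple G x g₁) : Set.Iic x) : L) := this
    _ = (g₁ : L) := h2

end Main2



lemma elemdiv_ne_bot {L : Type u} [PartialOrder L] [Fintype L] [OrderBot L]
    (z : L) (hz : z ≠ ⊥) (y : L) (hy : y ∈ elemDivisors z) : y ≠ ⊥ := by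
  intro hyb
  obtain ⟨a, hab, haz, hairr⟩ := exists_irred_nonbot z hz
  have : a = y := hy.2.2 a hairr haz (hyb ▸ bot_le)
  exact hab (this.trans hyb)

/-- the set of elementary divisors of `x` is the disjoint union of the sets
of elementary divisors of the factors of `x` in a building set `G`. -/
theorem elemDivisors_eq_disjUnion_over_factors {L : Type u} [SemilatticeInf L] [Fintype L]
    [OrderBot L] (G : Set L) (hG : IsBuilding G) (x : L) (hx : x ≠ ⊥) :
    (elemDivisors x = ⋃ g ∈ maxBelow G x, elemDivisors g) ∧
    (∀ g ∈ maxBelow G x, ∀ h ∈ maxBelow G x, g ≠ h →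
      elemDivisors g ∩ elemDivisors h = ∅) := by
  obtain ⟨hGbot, hBd⟩ := hG
  obtain ⟨φ, hφ⟩ := hBd x hx
  constructor
  · ext y
    constructor
    · intro hy
      obtain ⟨hy1, hy2, hy3⟩ := hy
      have hyb : y ≠ ⊥ := elemdiv_ne_bot x hx y ⟨hy1, hy2, hy3⟩
      obtain ⟨g, hg⟩ := exists_factor φ hφ y hy2 hyb hy1
      refine Set.mem_iUnion₂.mpr ⟨(g : L), g.2, hy1, hg, ?_⟩
      intro h hh hhg hyh
      exact hy3 h hh (hhg.trans g.2.2.1) hyh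
    · intro hy
      obtain ⟨g, hgmem, hy⟩ := Set.mem_iUnion₂.mp hy
      obtain ⟨hy1, hy2, hy3⟩ := hy
      have hgx : g ≤ x := hgmem.2.1
      have hgb : g ≠ ⊥ := hGbot g hgmem.1
      have hyb : y ≠ ⊥ := elemdiv_ne_bot g hgb y ⟨hy1, hy2, hy3⟩
      refine ⟨hy1, hy2.trans hgx, ?_⟩
      intro h hh hhx hyh
      have hhb : h ≠ ⊥ := fun e => hyb (le_bot_iff.mp (e ▸ hyh))
      obtain ⟨g', hg'⟩ := exists_factor φ hφ h hhx hhb hh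
      have huniq : (⟨g, hgmem⟩ : maxBelow G x) = g' :=
        unique_factor φ hφ y (hy2.trans hgx) hyb ⟨g, hgmem⟩ g' hy2 (hyh.trans hg')
      have hhg : h ≤ g := by rw [show g = (g' : L) from congrArg Subtype.val huniq]; exact hg'
      exact hy3 h hh hhg hyh
  · intro g hg h hh hne
    ext y
    simp only [Set.mem_inter_iff, Set.mem_empty_iff_false, iff_false, not_and]
    intro hyg hyh
    have hgb : g ≠ ⊥ := hGbot g hg.1
    have hyb : y ≠ ⊥ := elemdiv_ne_bot g hgb y hyg
    have := unique_factor φ hφ y (hyg.2.1.trans hg.2.1) hyb ⟨g, hg⟩ ⟨h, hh⟩ hyg.2.1 hyh.2.1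
    exact hne (congrArg Subtype.val this)
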